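/- Let 0 < x_0 < x_1 < … < x_m be distinct positive reals, let γ_j = Π_{l ≠ j} (0 − x_l)/(x_j − x_l), let λ₀ > 0, and let a : ℕ → ℝ satisfy Σ_{k=0}^∞ |a_k| r^k < ∞ for some r > x_m λ₀. Define f(y) = Σ_{k=0}^∞ a_k y^k. Then there exists a constant C ≥ 0 such that for every λ ∈ [0, λ₀], |Σ_{j=0}^m γ_j · f(x_j λ) − a_0| ≤ C · λ^{m+1}. -/

import Mathlib

open Polynomial Finset

lemma lagrange_key (m : ℕ) (x : Fin (m+1) → ℝ) (hinj : Function.Injective x)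
    (k : ℕ) (hk : k ≤ m) :
    ∑ j, (∏ l ∈ Finset.univ.erase j, (0 - x l) / (x j - x l)) * x j ^ k
      = if k = 0 then 1 else 0 := by
  have hvs : Set.InjOn x (Finset.univ : Finset (Fin (m+1))) := fun a _ b _ h => hinj h
  have hdeg : (X ^ k : ℝ[X]).degree < (#(Finset.univ : Finset (Fin (m+1))) : ℕ) := by
    simpa [Polynomial.degree_X_pow] using
      (by exact_mod_cast Nat.lt_succ_of_le hk : ((k : WithBot ℕ)) < ((m+1 : ℕ) : WithBot ℕ))
  have heq := Lagrange.eq_interpolate (s := Finset.univ) (v := x) hvs hdeg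
  have := congrArg (Polynomial.eval (0:ℝ)) heq
  rw [Lagrange.interpolate_apply] at this
  simp only [Polynomial.eval_finset_sum, Polynomial.eval_mul, Polynomial.eval_C,
    Polynomial.eval_pow, Polynomial.eval_X] at this
  have hbasis : ∀ j : Fin (m+1), Polynomial.eval 0 (Lagrange.basis Finset.univ x j)
      = ∏ l ∈ Finset.univ.erase j, (0 - x l) / (x j - x l) := by
    intro j
    rw [Lagrange.basis, Polynomial.eval_prod]
    refine Finset.prod_congr rfl fun l hl => ?_
    rw [Lagrange.basisDivisor]
    simp [div_eq_inv_mul]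
  rw [Finset.sum_congr rfl (fun j _ => by rw [hbasis j])] at this
  rw [Finset.sum_congr rfl (fun j _ => mul_comm _ _), ← this]
  rcases Nat.eq_zero_or_pos k with h|h
  · simp [h]
  · simp [h.ne']

/-- Richardson extrapolation bias bound `R_M = R + O(λ^{m+1})`: with positive
increasing nodes `x_0 < … < x_m`, Lagrange coefficients `γ_j` at zero, and a response
`f(y) = Σ_k a_k y^k` absolutely convergent on a radius `r > x_m λ₀`, there is a
constant `C ≥ 0` such that `|Σ_j γ_j f(x_j λ) − a_0| ≤ C λ^{m+1}` for all
`λ ∈ [0, λ₀]`. -/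
theorem richardson_bias_bound
    (m : ℕ) (x : Fin (m + 1) → ℝ) (hx0 : 0 < x 0) (hxmono : StrictMono x)
    (γ : Fin (m + 1) → ℝ)
    (hγ : ∀ j, γ j = ∏ l ∈ Finset.univ.erase j, (0 - x l) / (x j - x l))
    (lam₀ : ℝ) (hlam₀ : 0 < lam₀)
    (a : ℕ → ℝ) (r : ℝ) (hr : x (Fin.last m) * lam₀ < r)
    (hsum : Summable fun k : ℕ => |a k| * r ^ k)
    (f : ℝ → ℝ) (hf : ∀ y : ℝ, f y = ∑' k : ℕ, a k * y ^ k) :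
    ∃ C : ℝ, 0 ≤ C ∧ ∀ lam : ℝ, lam ∈ Set.Icc (0 : ℝ) lam₀ →
      |(∑ j, γ j * f (x j * lam)) - a 0| ≤ C * lam ^ (m + 1) := by
  have hxpos : ∀ j, 0 < x j := fun j => lt_of_lt_of_le hx0 (hxmono.monotone (Fin.zero_le j))
  have hxle : ∀ j, x j ≤ x (Fin.last m) := fun j => hxmono.monotone (Fin.le_last j)
  set xm := x (Fin.last m) with hxm_def
  have hxm : 0 < xm := hxpos _
  have hr0 : 0 < r := lt_trans (mul_pos hxm hlam₀) hr
  set G := ∑ j, |γ j| with hG_def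
  have hG0 : 0 ≤ G := Finset.sum_nonneg fun j _ => abs_nonneg _
  set S := ∑' k, |a k| * r ^ k with hS_def
  have hS0 : 0 ≤ S := tsum_nonneg fun k => mul_nonneg (abs_nonneg _) (by positivity)
  refine ⟨G * S / lam₀ ^ (m + 1), by positivity, ?_⟩
  intro lam hlam
  obtain ⟨hl0, hl1⟩ := hlam
  have key : ∀ k ≤ m, ∑ j, γ j * x j ^ k = if k = 0 then 1 else 0 := by
    intro k hk
    rw [Finset.sum_congr rfl (fun j _ => by rw [hγ j])]
    exact lagrange_key m x hxmono.injective k hk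
  -- basic bounds
  have hxlam_le : ∀ j : Fin (m+1), x j * lam ≤ r :=
    fun j => le_trans (mul_le_mul (hxle j) hl1 hl0 (le_of_lt hxm)) (le_of_lt hr)
  have hxlam_nonneg : ∀ j : Fin (m+1), 0 ≤ x j * lam :=
    fun j => mul_nonneg (le_of_lt (hxpos j)) hl0
  -- summability for each node
  have hsummand : ∀ j : Fin (m+1), Summable (fun k => a k * (x j * lam) ^ k) := by
    intro j
    refine Summable.of_abs (Summable.of_nonneg_of_le (fun k => abs_nonneg _) (fun k => ?_) hsum)
    rw [abs_mul, abs_pow, abs_of_nonneg (hxlam_nonneg j)]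
    exact mul_le_mul_of_nonneg_left (pow_le_pow_left₀ (hxlam_nonneg j) (hxlam_le j) k)
      (abs_nonneg _)
  set T : ℕ → ℝ := fun k => a k * lam ^ k * (∑ j, γ j * x j ^ k) with hT_def
  set U : ℕ → ℝ := fun k => if k ≤ m then 0 else T k with hU_def
  set V : ℕ → ℝ := fun k => if k = 0 then a 0 else 0 with hV_def
  have hTUV : ∀ k, T k = U k + V k := by
    intro k
    by_cases hk : k ≤ m
    · simp only [hU_def, hV_def, hT_def, hk, if_true, zero_add]
      rw [key k hk]
      rcases Nat.eq_zero_or_pos k with h|h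
      · simp [h]
      · simp [h.ne']
    · have hk0 : k ≠ 0 := by omega
      simp [hU_def, hV_def, hk, hk0]
  set q : ℝ := lam / lam₀ with hq_def
  have hq0 : 0 ≤ q := div_nonneg hl0 (le_of_lt hlam₀)
  have hq1 : q ≤ 1 := div_le_one_of_le₀ hl1 (le_of_lt hlam₀)
  set B : ℕ → ℝ := fun k => G * q ^ (m+1) * (|a k| * r ^ k) with hB_def
  have hBsum : Summable B := hsum.mul_left _
  have habs : ∀ k, |U k| ≤ B k := by
    intro k
    by_cases hk : k ≤ m
    · simp only [hU_def, hk, if_true, abs_zero, hB_def]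
      positivity
    · push_neg at hk
      simp only [hU_def, not_le.mpr hk, if_false, hT_def, hB_def]
      have h1 : |a k * lam ^ k * ∑ j, γ j * x j ^ k|
          ≤ |a k| * ∑ j, |γ j| * (x j * lam) ^ k := by
        rw [abs_mul, abs_mul, abs_pow, abs_of_nonneg hl0, mul_assoc]
        refine mul_le_mul_of_nonneg_left ?_ (abs_nonneg _)
        calc lam ^ k * |∑ j, γ j * x j ^ k| ≤ lam ^ k * ∑ j, |γ j * x j ^ k| :=
              mul_le_mul_of_nonneg_left (Finset.abs_sum_le_sum_abs _ _) (by positivity)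
          _ = ∑ j, |γ j| * (x j ^ k * lam ^ k) := by
              rw [Finset.mul_sum]
              refine Finset.sum_congr rfl fun j _ => ?_
              rw [abs_mul, abs_pow, abs_of_nonneg (le_of_lt (hxpos j))]; ring
          _ = ∑ j, |γ j| * (x j * lam) ^ k := by
              refine Finset.sum_congr rfl fun j _ => by rw [mul_pow]
      have h2 : ∀ j : Fin (m+1), (x j * lam) ^ k ≤ r ^ k * q ^ (m+1) := by
        intro j
        have hxl : x j * lam ≤ xm * lam₀ * q := by
          have heq : xm * lam₀ * q = xm * lam := by
            rw [hq_def]; field_simp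
          rw [heq]
          exact mul_le_mul_of_nonneg_right (hxle j) hl0
        calc (x j * lam) ^ k ≤ (xm * lam₀ * q) ^ k :=
              pow_le_pow_left₀ (hxlam_nonneg j) hxl k
          _ = (xm * lam₀) ^ k * q ^ k := mul_pow _ _ _
          _ ≤ r ^ k * q ^ (m+1) := by
              refine mul_le_mul (pow_le_pow_left₀ (by positivity) (le_of_lt hr) k)
                (pow_le_pow_of_le_one hq0 hq1 (by omega)) (by positivity) (by positivity)
      calc |a k * lam ^ k * ∑ j, γ j * x j ^ k|
          ≤ |a k| * ∑ j, |γ j| * (x j * lam) ^ k := h1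
        _ ≤ |a k| * ∑ j, |γ j| * (r ^ k * q ^ (m+1)) := by
            refine mul_le_mul_of_nonneg_left
              (Finset.sum_le_sum fun j _ =>
                mul_le_mul_of_nonneg_left (h2 j) (abs_nonneg _)) (abs_nonneg _)
        _ = G * q ^ (m+1) * (|a k| * r ^ k) := by
            rw [← Finset.sum_mul]; ring
  have hUsum : Summable U :=
    Summable.of_abs (Summable.of_nonneg_of_le (fun k => abs_nonneg _) habs hBsum)
  have hVsum : Summable V := by
    refine summable_of_ne_finset_zero (s := {0}) fun k hk => ?_
    simp only [hV_def]
    simp only [Finset.mem_singleton] at hk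
    simp [hk]
  have hVsumval : ∑' k, V k = a 0 := by
    simp only [hV_def]
    exact tsum_ite_eq 0 (fun _ => a 0)
  -- rewrite the finite sum as a tsum
  have hmain : (∑ j, γ j * f (x j * lam)) = ∑' k, T k := by
    have h1 : ∀ j : Fin (m+1), γ j * f (x j * lam)
        = ∑' k, γ j * (a k * (x j * lam) ^ k) := by
      intro j
      rw [hf, tsum_mul_left]
    rw [Finset.sum_congr rfl fun j _ => h1 j]
    rw [← Summable.tsum_finsetSum (fun j _ => (hsummand j).mul_left _)]
    refine tsum_congr fun k => ?_
    simp only [hT_def]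
    rw [Finset.mul_sum]
    refine Finset.sum_congr rfl fun j _ => ?_
    rw [mul_pow]; ring
  have hTsum : ∑' k, T k = (∑' k, U k) + a 0 := by
    rw [tsum_congr hTUV, Summable.tsum_add hUsum hVsum, hVsumval]
  rw [hmain, hTsum, add_sub_cancel_right]
  calc |∑' k, U k| ≤ ∑' k, |U k| := by
        simpa using norm_tsum_le_tsum_norm (f := U) (by simpa using hUsum.abs)
    _ ≤ ∑' k, B k := Summable.tsum_le_tsum habs hUsum.abs hBsum
    _ = G * q ^ (m+1) * S := by rw [hS_def, tsum_mul_left]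
    _ = G * S / lam₀ ^ (m + 1) * lam ^ (m + 1) := by
        rw [hq_def, div_pow]; field_simp
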